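/- Let X = {0} ∪ {1/n : n ∈ ℕ, n ≥ 1} with the metric inherited from ℝ. For every σ ∈ (0,1) and every natural number n with n > max{2/σ, 2}, setting δ = 2/(σ·n·(n−1)), there is no family 𝒰 of pairwise disjoint open subsets of X that covers X, has mesh at most δ, and has Lebesgue number at least σδ. In particular, X does not have capacity dimension 0. -/

import Mathlib

/-- The set `{0} ∪ {1/n : n ∈ ℕ, n ≥ 1}` in `ℝ`. -/
def seqSet : Set ℝ := {0} ∪ {x : ℝ | ∃ n : ℕ, 1 ≤ n ∧ x = 1 / (n : ℝ)}

/-- `X` has capacity dimension `0`: there is `σ ∈ (0,1)` such that every sufficiently small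
`δ > 0` admits a cover of `X` by pairwise disjoint open sets with mesh at most `δ` and
Lebesgue number at least `σδ`. -/
def HasCapDimZero (X : Type*) [MetricSpace X] : Prop :=
  ∃ σ : ℝ, σ ∈ Set.Ioo (0 : ℝ) 1 ∧ ∃ δ₀ : ℝ, 0 < δ₀ ∧ ∀ δ : ℝ, 0 < δ → δ ≤ δ₀ →
    ∃ 𝒰 : Set (Set X), (∀ U ∈ 𝒰, IsOpen U) ∧ (∀ x : X, ∃ U ∈ 𝒰, x ∈ U) ∧
      𝒰.Pairwise Disjoint ∧ (∀ U ∈ 𝒰, Metric.diam U ≤ δ) ∧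
      (∀ x : X, ∃ U ∈ 𝒰, Metric.ball x (σ * δ) ⊆ U)

lemma seqSet_mem_pt (k : ℕ) : (1 / ((k : ℝ) + 1)) ∈ seqSet :=
  Or.inr ⟨k + 1, Nat.le_add_left 1 k, by push_cast; ring⟩

/-- The point `1/(k+1)` of `seqSet`. -/
noncomputable def pt (k : ℕ) : ↥seqSet := ⟨1 / ((k : ℝ) + 1), seqSet_mem_pt k⟩

/-- The point `0` of `seqSet`. -/
def z0 : ↥seqSet := ⟨0, Or.inl rfl⟩

lemma seqSet_bound : ∀ a ∈ seqSet, 0 ≤ a ∧ a ≤ 1 := by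
  rintro a (rfl | ⟨m, hm, rfl⟩)
  · norm_num
  · have hm' : (1 : ℝ) ≤ (m : ℝ) := by exact_mod_cast hm
    constructor
    · positivity
    · rw [div_le_one (by linarith)]; linarith

lemma dist_pt (j : ℕ) : dist (pt (j + 1)) (pt j) = 1 / (((j : ℝ) + 1) * ((j : ℝ) + 2)) := by
  have h1 : (0 : ℝ) < (j : ℝ) + 1 := by positivity
  have h2 : (0 : ℝ) < (j : ℝ) + 2 := by positivity
  simp only [pt, Subtype.dist_eq, Real.dist_eq]
  push_cast
  rw [abs_of_nonpos (by rw [sub_nonpos]; gcongr <;> linarith)]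
  field_simp
  ring

lemma key (σ : ℝ) (hσ : σ ∈ Set.Ioo (0 : ℝ) 1) (n : ℕ) (hn : max (2 / σ) 2 < (n : ℝ)) :
    ¬ ∃ 𝒰 : Set (Set ↥seqSet),
      (∀ U ∈ 𝒰, IsOpen U) ∧
      (∀ x : ↥seqSet, ∃ U ∈ 𝒰, x ∈ U) ∧
      𝒰.Pairwise Disjoint ∧
      (∀ U ∈ 𝒰, Metric.diam U ≤ 2 / (σ * n * ((n : ℝ) - 1))) ∧
      (∀ x : ↥seqSet, ∃ U ∈ 𝒰,
        Metric.ball x (σ * (2 / (σ * n * ((n : ℝ) - 1)))) ⊆ U) := by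
  rintro ⟨𝒰, -, -, hdisj, hmesh, hleb⟩
  obtain ⟨hσ0, hσ1⟩ := hσ
  have h2σ : 2 / σ < n := (le_max_left _ _).trans_lt hn
  have h2 : (2 : ℝ) < n := (le_max_right _ _).trans_lt hn
  have hσn : 2 < σ * n := by
    have := (div_lt_iff₀ hσ0).1 h2σ; linarith [this]
  have hnpos : (0 : ℝ) < n := by linarith
  have hn1 : (1 : ℝ) < (n : ℝ) - 1 := by linarith
  have hden : (0 : ℝ) < σ * n * ((n : ℝ) - 1) :=
    mul_pos (mul_pos hσ0 hnpos) (by linarith)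
  set δ : ℝ := 2 / (σ * n * ((n : ℝ) - 1)) with hδ
  have hδpos : 0 < δ := div_pos two_pos hden
  have hσδ : σ * δ = 2 / ((n : ℝ) * ((n : ℝ) - 1)) := by
    rw [hδ]; field_simp
  have hσδpos : 0 < σ * δ := mul_pos hσ0 hδpos
  have h2n : 2 ≤ n := by exact_mod_cast h2.le
  have hcast : ((n - 2 : ℕ) : ℝ) = (n : ℝ) - 2 := by
    rw [Nat.cast_sub h2n]; norm_num
  -- consecutive points beyond index n-2 are closer than σδ
  have hstep : ∀ k : ℕ, dist (pt (n - 2 + k + 1)) (pt (n - 2 + k)) < σ * δ := by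
    intro k
    have hc : ((n - 2 + k : ℕ) : ℝ) = (n : ℝ) - 2 + (k : ℝ) := by
      push_cast [hcast]; ring
    have hk0 : (0 : ℝ) ≤ (k : ℝ) := Nat.cast_nonneg k
    rw [dist_pt, hσδ, hc]
    rw [div_lt_div_iff₀ (by nlinarith) (mul_pos hnpos (by linarith))]
    nlinarith
  obtain ⟨U, hU𝒰, hUball⟩ := hleb (pt (n - 2))
  have hmemU : ∀ k : ℕ, pt (n - 2 + k) ∈ U := by
    intro k
    induction k with
    | zero => exact hUball (Metric.mem_ball_self hσδpos)
    | succ k ih =>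
      obtain ⟨V, hV𝒰, hVball⟩ := hleb (pt (n - 2 + k))
      have h1 : pt (n - 2 + k) ∈ V := hVball (Metric.mem_ball_self hσδpos)
      have h2' : pt (n - 2 + k + 1) ∈ V := hVball (by rw [Metric.mem_ball]; exact hstep k)
      have hUV : U = V := by
        by_contra hne
        exact Set.disjoint_left.1 (hdisj hU𝒰 hV𝒰 hne) ih h1
      exact hUV ▸ h2'
  -- 0 is in U too
  obtain ⟨W, hW𝒰, hWball⟩ := hleb z0
  obtain ⟨k, hk⟩ := exists_nat_gt (1 / (σ * δ))
  have hzd : dist (pt (n - 2 + k)) z0 < σ * δ := by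
    have hc : ((n - 2 + k : ℕ) : ℝ) = (n : ℝ) - 2 + (k : ℝ) := by
      push_cast [hcast]; ring
    have h1k : (1 : ℝ) < (k : ℝ) * (σ * δ) := by
      rw [div_lt_iff₀ hσδpos] at hk; linarith
    have hk0 : (0 : ℝ) ≤ (k : ℝ) := Nat.cast_nonneg k
    simp only [pt, z0, Subtype.dist_eq, Real.dist_eq, sub_zero, hc]
    rw [abs_of_nonneg (le_of_lt (one_div_pos.2 (by nlinarith))), div_lt_iff₀ (by linarith)]
    nlinarith
  have h3 : pt (n - 2 + k) ∈ W := hWball (by rw [Metric.mem_ball]; exact hzd)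
  have hWU : W = U := by
    by_contra hne
    exact Set.disjoint_left.1 (hdisj hW𝒰 hU𝒰 hne) h3 (hmemU k)
  have hz : z0 ∈ U := hWU ▸ hWball (Metric.mem_ball_self hσδpos)
  -- U is bounded
  have hb : Bornology.IsBounded U := by
    rw [Metric.isBounded_iff]
    refine ⟨2, fun x hx y hy => ?_⟩
    obtain ⟨hx0, hx1⟩ := seqSet_bound x.1 x.2
    obtain ⟨hy0, hy1⟩ := seqSet_bound y.1 y.2
    rw [Subtype.dist_eq, Real.dist_eq, abs_le]
    constructor <;> linarith
  have hd : dist z0 (pt (n - 2)) ≤ δ :=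
    (Metric.dist_le_diam_of_mem hb hz (hmemU 0)).trans (hmesh U hU𝒰)
  have hdval : dist z0 (pt (n - 2)) = 1 / ((n : ℝ) - 1) := by
    simp only [pt, z0, Subtype.dist_eq, Real.dist_eq, hcast, zero_sub, abs_neg]
    rw [abs_of_nonneg (le_of_lt (one_div_pos.2 (by linarith)))]
    rw [show (n : ℝ) - 2 + 1 = (n : ℝ) - 1 by ring]
  rw [hdval, hδ, div_le_div_iff₀ (by linarith) hden] at hd
  nlinarith

theorem statement6 :
    (∀ σ : ℝ, σ ∈ Set.Ioo (0 : ℝ) 1 → ∀ n : ℕ, max (2 / σ) 2 < (n : ℝ) →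
      ¬ ∃ 𝒰 : Set (Set ↥seqSet),
        (∀ U ∈ 𝒰, IsOpen U) ∧
        (∀ x : ↥seqSet, ∃ U ∈ 𝒰, x ∈ U) ∧
        𝒰.Pairwise Disjoint ∧
        (∀ U ∈ 𝒰, Metric.diam U ≤ 2 / (σ * n * ((n : ℝ) - 1))) ∧
        (∀ x : ↥seqSet, ∃ U ∈ 𝒰,
          Metric.ball x (σ * (2 / (σ * n * ((n : ℝ) - 1)))) ⊆ U)) ∧
    ¬ HasCapDimZero ↥seqSet := by
  refine ⟨key, ?_⟩
  rintro ⟨σ, hσ, δ₀, hδ₀, h⟩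
  obtain ⟨hσ0, hσ1⟩ := hσ
  obtain ⟨n, hn⟩ := exists_nat_gt (max (max (2 / σ) 2) (2 / (σ * δ₀)))
  have hn1 : max (2 / σ) 2 < (n : ℝ) := (le_max_left _ _).trans_lt hn
  have hn2 : 2 / (σ * δ₀) < (n : ℝ) := (le_max_right _ _).trans_lt hn
  have h2 : (2 : ℝ) < n := ((le_max_right _ _).trans (le_max_left _ _)).trans_lt hn
  have hnpos : (0 : ℝ) < n := by linarith
  have hden : (0 : ℝ) < σ * n * ((n : ℝ) - 1) :=
    mul_pos (mul_pos hσ0 hnpos) (by linarith)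
  have hδpos : 0 < 2 / (σ * n * ((n : ℝ) - 1)) := div_pos two_pos hden
  have hδle : 2 / (σ * n * ((n : ℝ) - 1)) ≤ δ₀ := by
    rw [div_le_iff₀ hden]
    have h2σn : 2 < δ₀ * (σ * n) := by
      rw [div_lt_iff₀ (mul_pos hσ0 hδ₀)] at hn2; nlinarith
    nlinarith
  exact key σ ⟨hσ0, hσ1⟩ n hn1 (h _ hδpos hδle)
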